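/- If G is a 2r-regular striaeform edge graceful (p,q) graph and k is an odd positive integer, then kG is edge graceful. -/

import Mathlib

/-- A finite multigraph (no loops): each edge has an unordered pair of distinct ends. -/
structure Multigraph (V E : Type) [Fintype V] [DecidableEq V] [Fintype E] where
  ends : E → Sym2 V
  loopless : ∀ e, ¬ (ends e).IsDiag

variable {V E : Type} [Fintype V] [DecidableEq V] [Fintype E]

/-- The edges incident with a vertex. -/
def Multigraph.incident (G : Multigraph V E) (v : V) : Finset E :=
  Finset.univ.filter (fun e => v ∈ G.ends e)

/-- The degree of a vertex (no loops, so each incident edge counts once). -/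
def Multigraph.degree (G : Multigraph V E) (v : V) : ℕ := (G.incident v).card

/-- Edge gracefulness: the edges can be labeled bijectively by `1, …, q` so that the
vertex labels induced by summing labels of incident edges modulo `p` are distinct. -/
def Multigraph.EdgeGraceful (G : Multigraph V E) : Prop :=
  ∃ ℓ : E ≃ Fin (Fintype.card E),
    Function.Injective (fun v : V =>
      ∑ e ∈ G.incident v, (((ℓ e).val + 1 : ℕ) : ZMod (Fintype.card V)))

/-- The disjoint union of `k` copies of `G`. -/
def Multigraph.copies (G : Multigraph V E) (k : ℕ) : Multigraph (V × Fin k) (E × Fin k) where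
  ends e := (G.ends e.1).map (fun v => (v, e.2))
  loopless e h := G.loopless e.1 (by
    have : Function.Injective (fun v : V => (v, e.2)) := fun a b hab => congrArg Prod.fst hab
    rwa [Sym2.isDiag_map this] at h)

variable [DecidableEq E]

/-- `G` is striaeform: it has a 2-factorization `S₁, …, S_r` (every vertex is incident
with exactly 2 edges of each factor) and an edge graceful labeling such that the labels
of the `p` edges of each `Sⱼ`, reduced modulo `p`, are exactly `{1, 2, …, p}`
(i.e. all residues modulo `p`). -/
def Multigraph.Striaeform [Nonempty V] (G : Multigraph V E) (r : ℕ) : Prop :=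
  haveI : NeZero (Fintype.card V) := ⟨Fintype.card_ne_zero⟩
  ∃ (f : E → Fin r) (ℓ : E ≃ Fin (Fintype.card E)),
    (∀ (v : V) (j : Fin r),
        (Finset.univ.filter (fun e => f e = j ∧ v ∈ G.ends e)).card = 2) ∧
    Function.Injective (fun v : V =>
      ∑ e ∈ G.incident v, (((ℓ e).val + 1 : ℕ) : ZMod (Fintype.card V))) ∧
    (∀ j : Fin r,
      Finset.image (fun e => (((ℓ e).val + 1 : ℕ) : ZMod (Fintype.card V)))
        (Finset.univ.filter (fun e => f e = j)) = Finset.univ)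


section Aux

/-- coefficient sequence used in the relabeling -/
private def coefA (r k : ℕ) : ℕ → ZMod k := fun n =>
  if n = 0 then (if Even r then 2 else 1) else (-1) ^ n

private lemma two_isUnit {k : ℕ} (hkodd : Odd k) : IsUnit (2 : ZMod k) := by
  have : IsUnit ((2 : ℕ) : ZMod k) := by
    rw [ZMod.isUnit_iff_coprime]
    exact Nat.coprime_two_left.mpr hkodd
  simpa using this

private lemma coefA_isUnit {r k : ℕ} (hkodd : Odd k) (n : ℕ) : IsUnit (coefA r k n) := by
  unfold coefA
  split
  · split
    · exact two_isUnit hkodd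
    · exact isUnit_one
  · exact (isUnit_one.neg).pow n

private lemma coefA_sum {r k : ℕ} (hr : 0 < r) :
    ∑ n ∈ Finset.range r, coefA r k n = 1 := by
  have hbot : ∑ n ∈ Finset.range r, coefA r k n
      = coefA r k 0 + ∑ n ∈ Finset.Ico 1 r, coefA r k n := by
    rw [Finset.range_eq_Ico, Finset.sum_eq_sum_Ico_succ_bot hr]
  have hbot' : (∑ n ∈ Finset.range r, ((-1 : ZMod k)) ^ n)
      = 1 + ∑ n ∈ Finset.Ico 1 r, ((-1 : ZMod k)) ^ n := by
    rw [Finset.range_eq_Ico, Finset.sum_eq_sum_Ico_succ_bot hr]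
    norm_num
  have hmid : ∑ n ∈ Finset.Ico 1 r, coefA r k n
      = ∑ n ∈ Finset.Ico 1 r, ((-1 : ZMod k)) ^ n := by
    refine Finset.sum_congr rfl fun n hn => ?_
    have : n ≠ 0 := by
      have := (Finset.mem_Ico.mp hn).1; omega
    simp [coefA, this]
  have hgeo : (∑ n ∈ Finset.range r, ((-1 : ZMod k)) ^ n)
      = if Even r then 0 else 1 := neg_one_geom_sum
  rw [hbot, hmid]
  rcases Nat.even_or_odd r with he | ho
  · have : ∑ n ∈ Finset.Ico 1 r, ((-1 : ZMod k)) ^ n = -1 := by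
      have := hbot'.symm.trans hgeo
      rw [if_pos he] at this
      linear_combination this
    rw [this]
    simp [coefA, he]
    ring
  · have hnot : ¬ Even r := Nat.not_even_iff_odd.mpr ho
    have : ∑ n ∈ Finset.Ico 1 r, ((-1 : ZMod k)) ^ n = 0 := by
      have := hbot'.symm.trans hgeo
      rw [if_neg hnot] at this
      linear_combination this
    rw [this]
    simp [coefA, hnot]

private lemma sym2_filter_card {V : Type} [Fintype V] [DecidableEq V] (z : Sym2 V)
    (hz : ¬ z.IsDiag) : (Finset.univ.filter (fun v => v ∈ z)).card = 2 := by
  induction z using Sym2.ind with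
  | _ a b =>
    have hab : a ≠ b := by
      intro h; exact hz (by simp [h])
    have : Finset.univ.filter (fun v => v ∈ (s(a, b) : Sym2 V)) = {a, b} := by
      ext v; simp [Sym2.mem_iff]
    rw [this, Finset.card_pair hab]

end Aux

/-- Theorem 5: if `G` is a `2r`-regular striaeform edge graceful `(p,q)` graph and
`k` is odd, then `kG` is edge graceful. -/
theorem stmt_12 (p q r k : ℕ) (hp : 0 < p) (hr : 0 < r) (hk : 0 < k)
    (hpe : Nonempty (Fin p) := Fin.pos_iff_nonempty.mp hp)
    (G : Multigraph (Fin p) (Fin q))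
    (hreg : ∀ v, G.degree v = 2 * r)
    (hstr : G.Striaeform r)
    (hkodd : Odd k) :
    (G.copies k).EdgeGraceful := by
  classical
  haveI := hpe
  haveI : Nonempty (Fin k) := Fin.pos_iff_nonempty.mp hk
  haveI : NeZero p := ⟨hp.ne'⟩
  haveI : NeZero k := ⟨hk.ne'⟩
  haveI : NeZero (Fintype.card (Fin p)) := ⟨Fintype.card_ne_zero⟩
  haveI : NeZero (Fintype.card (Fin p × Fin k)) := ⟨Fintype.card_ne_zero⟩
  obtain ⟨f, ℓ, h2fac, hinj, hcover⟩ := hstr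
  -- the residue function
  set c : Fin q → ZMod (Fintype.card (Fin p)) :=
    fun e => (((ℓ e).val + 1 : ℕ) : ZMod (Fintype.card (Fin p))) with hc
  -- each fiber has cardinality p
  have hfib : ∀ j : Fin r, (Finset.univ.filter (fun e => f e = j)).card = p := by
    intro j
    have key : ∑ v : Fin p,
        (Finset.univ.filter (fun e => f e = j ∧ v ∈ G.ends e)).card
        = 2 * (Finset.univ.filter (fun e => f e = j)).card := by
      calc ∑ v : Fin p, (Finset.univ.filter (fun e => f e = j ∧ v ∈ G.ends e)).card
          = ∑ v : Fin p, ∑ e : Fin q, (if f e = j ∧ v ∈ G.ends e then 1 else 0) := by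
            refine Finset.sum_congr rfl fun v _ => ?_
            rw [Finset.card_filter]
        _ = ∑ e : Fin q, ∑ v : Fin p, (if f e = j ∧ v ∈ G.ends e then 1 else 0) :=
            Finset.sum_comm
        _ = ∑ e : Fin q, (if f e = j then 2 else 0) := by
            refine Finset.sum_congr rfl fun e _ => ?_
            by_cases hfe : f e = j
            · simp only [hfe, true_and, if_true]
              rw [← Finset.card_filter]
              exact sym2_filter_card _ (G.loopless e)
            · simp [hfe]
        _ = ∑ e ∈ Finset.univ.filter (fun e => f e = j), 2 := by
            rw [Finset.sum_filter]
        _ = 2 * (Finset.univ.filter (fun e => f e = j)).card := by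
            rw [Finset.sum_const, smul_eq_mul, mul_comm]
    have key2 : ∑ v : Fin p,
        (Finset.univ.filter (fun e => f e = j ∧ v ∈ G.ends e)).card = 2 * p := by
      rw [Finset.sum_congr rfl (fun v _ => h2fac v j), Finset.sum_const,
        Finset.card_univ, Fintype.card_fin, smul_eq_mul, mul_comm]
    omega
  -- q = r * p
  have hq : q = r * p := by
    have := Finset.card_eq_sum_card_fiberwise
      (f := f) (s := (Finset.univ : Finset (Fin q))) (t := Finset.univ)
      (fun e _ => Finset.mem_univ _)
    simp only [Finset.card_univ, Fintype.card_fin] at this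
    rw [this, Finset.sum_congr rfl (fun j _ => hfib j), Finset.sum_const,
      Finset.card_univ, Fintype.card_fin, smul_eq_mul]
  -- c is injective on each fiber
  have hcinj : ∀ j : Fin r,
      Set.InjOn c (Finset.univ.filter (fun e => f e = j)) := by
    intro j
    apply Finset.injOn_of_card_image_eq
    rw [hcover j, hfib j, Finset.card_univ, ZMod.card, Fintype.card_fin]
  -- the shift amounts
  set w : Fin r → Fin k → ℕ := fun j i => (coefA r k j.val * (i.val : ZMod k)).val with hw
  have hwlt : ∀ j i, w j i < k := fun j i => ZMod.val_lt _
  have hplt : ∀ e, (c e).val < p := by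
    intro e
    have := ZMod.val_lt (c e)
    simpa using this
  -- the new labels
  set lab : Fin q × Fin k → ℕ :=
    fun ei => p * ((f ei.1).val * k + w (f ei.1) ei.2) + (c ei.1).val with hlab
  have hblt : ∀ (j : Fin r) (i : Fin k), j.val * k + w j i < r * k := by
    intro j i
    have h1 := hwlt j i
    calc j.val * k + w j i < j.val * k + k := by omega
      _ = (j.val + 1) * k := by ring
      _ ≤ r * k := Nat.mul_le_mul_right k j.isLt
  have hlablt : ∀ ei, lab ei < q * k := by
    rintro ⟨e, i⟩
    have h1 := hblt (f e) i
    have h2 := hplt e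
    calc lab (e, i) < p * ((f e).val * k + w (f e) i) + p := by
          simp only [hlab]; omega
      _ = p * ((f e).val * k + w (f e) i + 1) := by ring
      _ ≤ p * (r * k) := Nat.mul_le_mul_left p (by omega)
      _ = q * k := by rw [hq]; ring
  -- injectivity of the labels
  have hlabinj : Function.Injective lab := by
    rintro ⟨e, i⟩ ⟨e', i'⟩ h
    simp only [hlab] at h
    have hρ : (c e).val = (c e').val := by
      have h1 := hplt e
      have h2 := hplt e'
      have := congrArg (· % p) h
      simpa [Nat.mul_add_mod, Nat.mod_eq_of_lt h1, Nat.mod_eq_of_lt h2] using this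
    have hA : (f e).val * k + w (f e) i = (f e').val * k + w (f e') i' := by
      rw [hρ] at h
      exact Nat.eq_of_mul_eq_mul_left hp (by omega)
    have hWw : w (f e) i = w (f e') i' := by
      have h1 := hwlt (f e) i
      have h2 := hwlt (f e') i'
      have := congrArg (· % k) hA
      simpa [mul_comm, Nat.mul_add_mod, Nat.mod_eq_of_lt h1, Nat.mod_eq_of_lt h2] using this
    have hff : f e = f e' := by
      have : (f e).val * k = (f e').val * k := by omega
      exact Fin.ext (Nat.eq_of_mul_eq_mul_right hk this)
    have hii : i = i' := by
      have hval : coefA r k (f e).val * (i.val : ZMod k)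
          = coefA r k (f e).val * (i'.val : ZMod k) := by
        apply ZMod.val_injective
        rw [hw] at hWw
        simpa [hff] using hWw
      have := (coefA_isUnit hkodd (f e).val).mul_left_cancel hval
      have hvv : i.val = i'.val := by
        have := congrArg ZMod.val this
        rwa [ZMod.val_cast_of_lt i.isLt, ZMod.val_cast_of_lt i'.isLt] at this
      exact Fin.ext hvv
    have hee : e = e' := by
      have hce : c e = c e' := ZMod.val_injective _ hρ
      refine hcinj (f e) ?_ ?_ hce
      · simp
      · simp [Finset.mem_coe, Finset.mem_filter, hff.symm]
    exact Prod.ext hee hii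
  -- build the equivalence
  have hlablt' : ∀ ei, lab ei < Fintype.card (Fin q × Fin k) := by
    intro ei
    have := hlablt ei
    simpa using this
  rw [Multigraph.EdgeGraceful]
  set L : (Fin q × Fin k) → Fin (Fintype.card (Fin q × Fin k)) :=
    fun ei => ⟨lab ei, hlablt' ei⟩ with hL
  have hLbij : Function.Bijective L := by
    rw [Fintype.bijective_iff_injective_and_card]
    constructor
    · intro a b hab
      apply hlabinj
      simpa [hL, Fin.mk.injEq] using hab
    · simp
  refine ⟨Equiv.ofBijective L hLbij, ?_⟩
  -- the incident set in the copies
  have hinc : ∀ (v : Fin p) (i : Fin k), (G.copies k).incident (v, i)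
      = (G.incident v).map ⟨fun e => (e, i), fun a b hab => congrArg Prod.fst hab⟩ := by
    intro v i
    ext ⟨e, i'⟩
    simp only [Multigraph.incident, Multigraph.copies, Finset.mem_filter, Finset.mem_univ,
      true_and, Finset.mem_map, Function.Embedding.coeFn_mk, Sym2.mem_map, Prod.mk.injEq,
      Prod.ext_iff]
    constructor
    · rintro ⟨u, hu, hu1, hu2⟩
      exact ⟨e, by simpa [hu1] using hu, rfl, hu2.symm⟩
    · rintro ⟨a, ha, h1, h2⟩
      exact ⟨v, by rwa [← h1], rfl, h2.symm⟩
  -- counting edges of each factor at a vertex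
  have hcard2 : ∀ (v : Fin p) (j : Fin r),
      ((G.incident v).filter (fun e => f e = j)).card = 2 := by
    intro v j
    rw [← h2fac v j]
    congr 1
    ext e
    simp [Multigraph.incident, Finset.mem_filter, and_comm]
  -- the natural number sums
  set Anat : Fin p → ℕ := fun v => ∑ e ∈ G.incident v, ((c e).val + 1) with hAnat
  set Bnat : Fin k → ℕ := fun i => ∑ j : Fin r, w j i with hBnat
  have hsum_nat : ∀ (v : Fin p) (i : Fin k),
      ∑ e ∈ G.incident v, (lab (e, i) + 1)
        = (p * k) * (∑ e ∈ G.incident v, (f e).val) + (Anat v + 2 * p * Bnat i) := by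
    intro v i
    have hfibsum : ∑ e ∈ G.incident v, w (f e) i = 2 * Bnat i := by
      rw [← Finset.sum_fiberwise (G.incident v) f (fun e => w (f e) i), hBnat,
        Finset.mul_sum]
      refine Finset.sum_congr rfl fun j _ => ?_
      rw [Finset.sum_congr rfl (fun e he => by
        rw [(Finset.mem_filter.mp he).2]), Finset.sum_const, hcard2 v j, smul_eq_mul]
    calc ∑ e ∈ G.incident v, (lab (e, i) + 1)
        = ∑ e ∈ G.incident v,
            ((p * k) * (f e).val + (p * w (f e) i + ((c e).val + 1))) := by
          refine Finset.sum_congr rfl fun e _ => ?_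
          simp only [hlab]; ring
      _ = (p * k) * (∑ e ∈ G.incident v, (f e).val)
            + (p * ∑ e ∈ G.incident v, w (f e) i + Anat v) := by
          rw [Finset.sum_add_distrib, Finset.sum_add_distrib, ← Finset.mul_sum,
            ← Finset.mul_sum, hAnat]
      _ = _ := by rw [hfibsum]; ring
  have hpk0 : ((p * k : ℕ) : ZMod (Fintype.card (Fin p × Fin k))) = 0 := by
    rw [ZMod.natCast_eq_zero_iff]
    simp
  -- the sums in `ZMod (card (Fin p × Fin k))`
  have hsum : ∀ (v : Fin p) (i : Fin k),
      (∑ e' ∈ (G.copies k).incident (v, i),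
        ((((Equiv.ofBijective L hLbij) e').val + 1 : ℕ)
          : ZMod (Fintype.card (Fin p × Fin k))))
      = ((Anat v + 2 * p * Bnat i : ℕ) : ZMod (Fintype.card (Fin p × Fin k))) := by
    intro v i
    rw [hinc v i, Finset.sum_map]
    have hterm : ∀ e ∈ G.incident v,
        ((((Equiv.ofBijective L hLbij) ((⟨fun e => (e, i),
            fun a b hab => congrArg Prod.fst hab⟩ : Fin q ↪ Fin q × Fin k) e)).val + 1 : ℕ)
            : ZMod (Fintype.card (Fin p × Fin k)))
        = ((lab (e, i) + 1 : ℕ) : ZMod (Fintype.card (Fin p × Fin k))) := by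
      intro e _
      rfl
    rw [Finset.sum_congr rfl hterm, ← Nat.cast_sum, hsum_nat v i]
    rw [Nat.cast_add, Nat.cast_mul, hpk0, zero_mul, zero_add]
  -- prove injectivity
  rintro ⟨v, i⟩ ⟨v', i'⟩ h
  simp only at h
  rw [hsum v i, hsum v' i'] at h
  -- reduce mod p : v = v'
  have hdvd : Fintype.card (Fin p) ∣ Fintype.card (Fin p × Fin k) := by
    rw [Fintype.card_prod]
    exact dvd_mul_right _ _
  have hp0 : ((p : ℕ) : ZMod (Fintype.card (Fin p))) = 0 := by
    rw [ZMod.natCast_eq_zero_iff]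
    simp
  have hmodp : ((Anat v : ℕ) : ZMod (Fintype.card (Fin p)))
      = ((Anat v' : ℕ) : ZMod (Fintype.card (Fin p))) := by
    have := congrArg (ZMod.castHom hdvd (ZMod (Fintype.card (Fin p)))) h
    rw [map_natCast, map_natCast] at this
    push_cast at this
    rw [hp0] at this
    simpa using this
  have hAv : ∀ v : Fin p, ((Anat v : ℕ) : ZMod (Fintype.card (Fin p)))
      = (∑ e ∈ G.incident v, (((ℓ e).val + 1 : ℕ) : ZMod (Fintype.card (Fin p))))
        + ((2 * r : ℕ) : ZMod (Fintype.card (Fin p))) := by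
    intro v
    rw [hAnat]
    push_cast
    rw [Finset.sum_add_distrib]
    congr 1
    · refine Finset.sum_congr rfl fun e _ => ?_
      rw [hc, ZMod.natCast_zmod_val]
      push_cast
      rfl
    · rw [Finset.sum_const, ← Multigraph.degree, hreg v, nsmul_eq_mul]
      push_cast
      ring
  have hvv : v = v' := by
    apply hinj
    have h2 := hmodp
    rw [hAv v, hAv v'] at h2
    exact add_right_cancel h2
  subst hvv
  -- reduce mod k : i = i'
  have hBmod : ∀ i : Fin k, ((Bnat i : ℕ) : ZMod k) = (i.val : ZMod k) := by
    intro i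
    rw [hBnat]
    push_cast
    have hterm : ∀ j : Fin r, ((w j i : ℕ) : ZMod k) = coefA r k j.val * (i.val : ZMod k) := by
      intro j
      rw [hw, ZMod.natCast_zmod_val]
    rw [Finset.sum_congr rfl (fun j _ => hterm j), ← Finset.sum_mul,
      Fin.sum_univ_eq_sum_range (fun n => coefA r k n), coefA_sum hr, one_mul]
  have hmodk : ((2 * Bnat i : ℕ) : ZMod k) = ((2 * Bnat i' : ℕ) : ZMod k) := by
    have hme : (Anat v + 2 * p * Bnat i) ≡ (Anat v + 2 * p * Bnat i') [MOD p * k] := by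
      have := (ZMod.natCast_eq_natCast_iff _ _ _).mp h
      simpa using this
    have hint : ((p : ℤ) * k) ∣ (p : ℤ) * ((2 * (Bnat i' : ℤ)) - (2 * (Bnat i : ℤ))) := by
      have := Nat.modEq_iff_dvd.mp hme
      push_cast at this
      convert this using 1
      ring
    have hkdvd : (k : ℤ) ∣ ((2 * (Bnat i' : ℤ)) - (2 * (Bnat i : ℤ))) := by
      have hpne : (p : ℤ) ≠ 0 := by exact_mod_cast hp.ne'
      exact (mul_dvd_mul_iff_left hpne).mp hint
    rw [ZMod.natCast_eq_natCast_iff, Nat.modEq_iff_dvd]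
    convert hkdvd using 1
    push_cast
    ring
  have h2i : (2 : ZMod k) * (i.val : ZMod k) = (2 : ZMod k) * (i'.val : ZMod k) := by
    have h3 := hmodk
    push_cast at h3
    rwa [hBmod i, hBmod i'] at h3
  have h4 := (two_isUnit hkodd).mul_left_cancel h2i
  have hvv' : i.val = i'.val := by
    have h5 := congrArg ZMod.val h4
    rwa [ZMod.val_cast_of_lt i.isLt, ZMod.val_cast_of_lt i'.isLt] at h5
  exact Prod.ext rfl (Fin.ext hvv')
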